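/- Let A be a relatively compact subset of a real Hilbert space H with d(A) > 0. Then r_H(A) < (1/√2)·d(A) (Gulevich's theorem). -/

import Mathlib

open scoped RealInnerProductSpace
open Metric


private lemma comb_aux {ι : Type*} (bad : ι → ι → Prop) [DecidableRel bad]
    (hsym : ∀ i j, bad i j → bad j i) (hdiag : ∀ i, bad i i) :
    ∀ (k : ℕ) (t : Finset ι) (w : ι → ℝ), (∀ i ∈ t, 0 ≤ w i) → 0 < ∑ i ∈ t, w i →
      (∑ i ∈ t, ∑ j ∈ t, if bad i j then w i * w j else 0) ≤ (∑ i ∈ t, w i) ^ 2 / 4 ^ (k + 1) →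
      ∃ f : Fin k → ι, (∀ a, f a ∈ t) ∧ ∀ a b, a ≠ b → ¬ bad (f a) (f b) := by
  intro k
  induction k with
  | zero =>
    intro t w _ _ _
    exact ⟨Fin.elim0, fun a => a.elim0, fun a => a.elim0⟩
  | succ k ih =>
    intro t w hw hs hB
    classical
    set s := ∑ i ∈ t, w i with hs_def
    set B := ∑ i ∈ t, ∑ j ∈ t, if bad i j then w i * w j else 0 with hB_def
    set row : ι → ℝ := fun i => ∑ j ∈ t, if bad i j then w j else 0 with hrow_def
    have hrow_nn : ∀ i, 0 ≤ row i := fun i => Finset.sum_nonneg fun j hj => by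
      split_ifs
      · exact hw j hj
      · exact le_rfl
    have hBrow : B = ∑ i ∈ t, w i * row i := by
      refine Finset.sum_congr rfl fun i _ => ?_
      rw [Finset.mul_sum]
      exact Finset.sum_congr rfl fun j _ => by split_ifs <;> ring
    have hex : ∃ i₀ ∈ t, 0 < w i₀ ∧ row i₀ ≤ B / s := by
      by_contra hcon
      push_neg at hcon
      have hsupp : ∃ i ∈ t, 0 < w i := by
        by_contra hno; push_neg at hno
        have : s ≤ 0 := Finset.sum_nonpos fun i hi => hno i hi
        linarith
      obtain ⟨i₁, hi₁, hwi₁⟩ := hsupp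
      have h1 : ∀ i ∈ t, w i * (B / s) ≤ w i * row i := by
        intro i hi
        rcases eq_or_lt_of_le (hw i hi) with h | h
        · simp [← h]
        · exact mul_le_mul_of_nonneg_left (le_of_lt (hcon i hi h)) (le_of_lt h)
      have hlt : ∑ i ∈ t, w i * (B / s) < ∑ i ∈ t, w i * row i :=
        Finset.sum_lt_sum h1 ⟨i₁, hi₁, mul_lt_mul_of_pos_left (hcon i₁ hi₁ hwi₁) hwi₁⟩
      rw [← Finset.sum_mul, ← hs_def, ← hBrow, mul_comm, div_mul_cancel₀ B (ne_of_gt hs)] at hlt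
      exact lt_irrefl B hlt
    obtain ⟨i₀, hi₀t, hwi₀, hrow₀⟩ := hex
    set t' := t.filter (fun j => ¬ bad i₀ j) with ht'
    have ht'sub : t' ⊆ t := Finset.filter_subset _ _
    have hsplit : ∑ j ∈ t', w j = s - row i₀ := by
      have h := Finset.sum_filter_add_sum_filter_not t (fun j => bad i₀ j) w
      have h2 : ∑ j ∈ t.filter (fun j => bad i₀ j), w j = row i₀ := by
        rw [hrow_def, Finset.sum_filter]
      have h3 : ∑ j ∈ t.filter (fun j => ¬ bad i₀ j), w j
          = s - ∑ j ∈ t.filter (fun j => bad i₀ j), w j := by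
        rw [hs_def]; linarith
      rw [ht', h3, h2]
    have hB_nn : 0 ≤ B := hBrow ▸ Finset.sum_nonneg fun i hi => mul_nonneg (hw i hi) (hrow_nn i)
    have hrow_le : row i₀ ≤ s / 4 := by
      have h1 : B / s ≤ s / 4 ^ (k + 2) := by
        rw [div_le_div_iff₀ hs (by positivity)]
        calc B * 4 ^ (k + 2) ≤ (s ^ 2 / 4 ^ (k + 1 + 1)) * 4 ^ (k + 2) :=
              mul_le_mul_of_nonneg_right hB (by positivity)
          _ = s ^ 2 := div_mul_cancel₀ _ (by positivity)
          _ = s * s := sq s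
      have h2 : s / 4 ^ (k + 2) ≤ s / 4 := by
        apply div_le_div_of_nonneg_left (le_of_lt hs) (by norm_num)
        calc (4:ℝ) = 4 ^ 1 := (pow_one 4).symm
          _ ≤ 4 ^ (k + 2) := pow_le_pow_right₀ (by norm_num) (by omega)
      exact le_trans (le_trans hrow₀ h1) h2
    have hs' : 0 < ∑ j ∈ t', w j := by rw [hsplit]; linarith
    have hs'2 : s ≤ 2 * ∑ j ∈ t', w j := by rw [hsplit]; linarith
    have hB'le : (∑ i ∈ t', ∑ j ∈ t', if bad i j then w i * w j else 0) ≤ B := by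
      rw [hB_def]
      refine le_trans (Finset.sum_le_sum fun i hi =>
        Finset.sum_le_sum_of_subset_of_nonneg ht'sub fun j hj _ => ?_)
        (Finset.sum_le_sum_of_subset_of_nonneg ht'sub fun i hi _ =>
          Finset.sum_nonneg fun j hj => ?_)
      · split_ifs
        · exact mul_nonneg (hw i (ht'sub hi)) (hw j hj)
        · exact le_rfl
      · split_ifs
        · exact mul_nonneg (hw i hi) (hw j hj)
        · exact le_rfl
    have hB'cond : (∑ i ∈ t', ∑ j ∈ t', if bad i j then w i * w j else 0)
        ≤ (∑ j ∈ t', w j) ^ 2 / 4 ^ (k + 1) := by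
      refine le_trans hB'le (le_trans hB ?_)
      have hkey : s ^ 2 ≤ (2 * ∑ j ∈ t', w j) ^ 2 := by nlinarith
      calc s ^ 2 / 4 ^ (k + 1 + 1) ≤ (2 * ∑ j ∈ t', w j) ^ 2 / 4 ^ (k + 1 + 1) := by
            gcongr
        _ = (∑ j ∈ t', w j) ^ 2 / 4 ^ (k + 1) := by
            rw [pow_succ]; field_simp; ring
    obtain ⟨f, hf1, hf2⟩ := ih t' w (fun i hi => hw i (ht'sub hi)) hs' hB'cond
    have hgood : ∀ a, ¬ bad i₀ (f a) := fun a => (Finset.mem_filter.mp (hf1 a)).2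
    refine ⟨Fin.cons i₀ f, ?_, ?_⟩
    · intro a
      induction a using Fin.cases with
      | zero => simpa using hi₀t
      | succ a => simpa using ht'sub (hf1 a)
    · intro a b hab
      induction a using Fin.cases with
      | zero =>
        induction b using Fin.cases with
        | zero => exact absurd rfl hab
        | succ b => simpa using hgood b
      | succ a =>
        induction b using Fin.cases with
        | zero =>
          simp only [Fin.cons_succ, Fin.cons_zero]
          exact fun h => hgood a (hsym _ _ h)
        | succ b =>
          simp only [Fin.cons_succ]
          exact hf2 a b (fun h => hab (congrArg Fin.succ h))



private lemma sum_identity {H : Type*} [NormedAddCommGroup H] [InnerProductSpace ℝ H]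
    {ι : Type*} (t : Finset ι) (w : ι → ℝ) (u : ι → H) (hw1 : ∑ i ∈ t, w i = 1) :
    ∑ i ∈ t, ∑ j ∈ t, w i * w j * ‖u i - u j‖ ^ 2
      = 2 * (∑ i ∈ t, w i * ‖u i‖ ^ 2) - 2 * ‖∑ i ∈ t, w i • u i‖ ^ 2 := by
  have hnorm : ‖∑ i ∈ t, w i • u i‖ ^ 2 = ∑ i ∈ t, ∑ j ∈ t, w i * w j * ⟪u i, u j⟫ := by
    rw [← real_inner_self_eq_norm_sq, sum_inner]
    refine Finset.sum_congr rfl fun i _ => ?_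
    rw [inner_sum]
    refine Finset.sum_congr rfl fun j _ => ?_
    rw [real_inner_smul_left, real_inner_smul_right]; ring
  have hexp : ∀ i ∈ t, ∀ j ∈ t, w i * w j * ‖u i - u j‖ ^ 2
      = w i * ‖u i‖ ^ 2 * w j + w i * (w j * ‖u j‖ ^ 2) - 2 * (w i * w j * ⟪u i, u j⟫) := by
    intro i _ j _; rw [norm_sub_sq_real]; ring
  calc ∑ i ∈ t, ∑ j ∈ t, w i * w j * ‖u i - u j‖ ^ 2
      = ∑ i ∈ t, ∑ j ∈ t, (w i * ‖u i‖ ^ 2 * w j + w i * (w j * ‖u j‖ ^ 2)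
          - 2 * (w i * w j * ⟪u i, u j⟫)) :=
        Finset.sum_congr rfl fun i hi => Finset.sum_congr rfl fun j hj => hexp i hi j hj
    _ = (∑ i ∈ t, w i * ‖u i‖ ^ 2) * (∑ j ∈ t, w j) + (∑ i ∈ t, w i) * (∑ j ∈ t, w j * ‖u j‖ ^ 2)
        - 2 * ∑ i ∈ t, ∑ j ∈ t, w i * w j * ⟪u i, u j⟫ := by
        simp only [Finset.sum_add_distrib, Finset.sum_sub_distrib, ← Finset.sum_mul,
          ← Finset.mul_sum]
    _ = 2 * (∑ i ∈ t, w i * ‖u i‖ ^ 2) - 2 * ‖∑ i ∈ t, w i • u i‖ ^ 2 := by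
        rw [hw1, hnorm]; ring

noncomputable def chebRadius {H : Type*} [NormedAddCommGroup H] (A : Set H) : ℝ :=
  ⨅ y : H, ⨆ x : A, ‖(x : H) - y‖

set_option maxHeartbeats 1000000 in
theorem stmt6 {H : Type*} [NormedAddCommGroup H] [InnerProductSpace ℝ H] [CompleteSpace H] (A : Set H)
    (hA : A.Nonempty) (hc : IsCompact (closure A)) (hd : 0 < Metric.diam A) :
    chebRadius A < (1 / Real.sqrt 2) * Metric.diam A := by
  classical
  set d := Metric.diam A with hd_def
  set K := closure A with hK_def
  have hKne : K.Nonempty := hA.closure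
  have hdiamK : Metric.diam K = d := by rw [hK_def, hd_def]; exact Metric.diam_closure (s := A)
  have hKb : Bornology.IsBounded K := hc.isBounded
  set R : H → ℝ := fun y => sSup ((fun x => ‖x - y‖) '' K) with hR_def
  have hatt : ∀ y : H, ∃ x ∈ K, (∀ x' ∈ K, ‖x' - y‖ ≤ ‖x - y‖) ∧ R y = ‖x - y‖ := by
    intro y
    have hcont : ContinuousOn (fun x : H => ‖x - y‖) K :=
      ((continuous_id.sub continuous_const).norm).continuousOn
    obtain ⟨x, hxK, hmax⟩ := hc.exists_isMaxOn hKne hcont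
    have hgr : IsGreatest ((fun x => ‖x - y‖) '' K) ‖x - y‖ :=
      ⟨⟨x, hxK, rfl⟩, by rintro _ ⟨x', hx', rfl⟩; exact hmax hx'⟩
    exact ⟨x, hxK, fun x' hx' => hmax hx', hgr.csSup_eq⟩
  have hRle : ∀ y : H, ∀ x ∈ K, ‖x - y‖ ≤ R y := by
    intro y x hx
    obtain ⟨x₀, _, h, e⟩ := hatt y
    rw [e]; exact h x hx
  have hR0 : ∀ y, 0 ≤ R y := by
    intro y; obtain ⟨x, hx, _, he⟩ := hatt y; rw [he]; exact norm_nonneg _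
  have hReq : ∀ y : H, (⨆ x : A, ‖(x : H) - y‖) = R y := by
    intro y
    obtain ⟨x₀, hx₀, hmax, he⟩ := hatt y
    have hbddK : BddAbove ((fun x => ‖x - y‖) '' K) := ⟨R y, fun v hv => by
      obtain ⟨x, hx, rfl⟩ := hv; exact hRle y x hx⟩
    have hbddA : BddAbove ((fun x => ‖x - y‖) '' A) :=
      hbddK.mono (Set.image_mono subset_closure)
    rw [iSup, ← Set.image_eq_range (fun z : H => ‖z - y‖) A]
    apply le_antisymm
    · exact csSup_le_csSup hbddK (hA.image _) (Set.image_mono subset_closure)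
    · rw [he]
      have hcl : IsClosed {x : H | ‖x - y‖ ≤ sSup ((fun x => ‖x - y‖) '' A)} :=
        isClosed_le ((continuous_id.sub continuous_const).norm) continuous_const
      have hsub : A ⊆ {x : H | ‖x - y‖ ≤ sSup ((fun x => ‖x - y‖) '' A)} :=
        fun x hx => le_csSup hbddA ⟨x, hx, rfl⟩
      exact hcl.closure_subset_iff.mpr hsub hx₀
  have hchb : chebRadius A = ⨅ y : H, R y := by
    unfold chebRadius; exact iInf_congr hReq
  -- the compact convex "hull" Q
  set Q := closure (convexHull ℝ K) with hQ_def
  have hQcomp : IsCompact Q :=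
    TotallyBounded.isCompact_of_isClosed
      (totallyBounded_convexHull.mpr hc.totallyBounded).closure isClosed_closure
  have hQconv : Convex ℝ Q := (convex_convexHull ℝ K).closure
  have hKQ : K ⊆ Q := (subset_convexHull ℝ K).trans subset_closure
  have hQne : Q.Nonempty := hKne.mono hKQ
  have hRcont : Continuous R := by
    have hlip : ∀ y y' : H, R y ≤ R y' + ‖y - y'‖ := by
      intro y y'
      obtain ⟨x, hx, _, he⟩ := hatt y
      rw [he]
      have h1 : ‖x - y‖ ≤ ‖x - y'‖ + ‖y' - y‖ := by
        have := norm_add_le (x - y') (y' - y)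
        have h2 : (x - y') + (y' - y) = x - y := by abel
        rwa [h2] at this
      have h3 : ‖x - y'‖ ≤ R y' := hRle y' x hx
      rw [norm_sub_rev y' y] at h1
      linarith
    have : LipschitzWith 1 R := by
      apply LipschitzWith.of_dist_le_mul
      intro y y'
      rw [NNReal.coe_one, one_mul, Real.dist_eq, abs_sub_le_iff, dist_eq_norm]
      constructor
      · have := hlip y y'; linarith
      · have := hlip y' y; rw [norm_sub_rev] at this; linarith
    exact this.continuous
  obtain ⟨c, hcQ, hcmin⟩ := hQcomp.exists_isMinOn hQne hRcont.continuousOn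
  have hglob : ∀ y : H, R c ≤ R y := by
    intro y
    obtain ⟨v, hvQ, hv⟩ := exists_norm_eq_iInf_of_complete_convex hQne
      (isClosed_closure.isComplete) hQconv y
    have hchar := (norm_eq_iInf_iff_real_inner_le_zero hQconv hvQ).mp hv
    have hle : ∀ x ∈ K, ‖x - v‖ ≤ ‖x - y‖ := by
      intro x hx
      have h1 : ⟪y - v, x - v⟫ ≤ 0 := hchar x (hKQ hx)
      have h2 : ⟪x - v, y - v⟫ ≤ 0 := by rwa [real_inner_comm] at h1
      have hexp : ‖x - y‖ ^ 2 = ‖x - v‖ ^ 2 - 2 * ⟪x - v, y - v⟫ + ‖y - v‖ ^ 2 := by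
        have h3 : x - y = (x - v) - (y - v) := by abel
        rw [h3, norm_sub_sq_real]
      nlinarith [norm_nonneg (x - v), norm_nonneg (x - y), sq_nonneg ‖y - v‖]
    obtain ⟨x, hxK, _, he⟩ := hatt v
    calc R c ≤ R v := hcmin hvQ
      _ = ‖x - v‖ := he
      _ ≤ ‖x - y‖ := hle x hxK
      _ ≤ R y := hRle y x hxK
  set r := R c with hr_def
  have hchc : chebRadius A = r := by
    rw [hchb]
    apply le_antisymm
    · exact ciInf_le ⟨0, by rintro _ ⟨y, rfl⟩; exact hR0 y⟩ c
    · exact le_ciInf hglob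
  by_contra hcon
  push_neg at hcon
  rw [hchc] at hcon
  have hs2 : (0:ℝ) < Real.sqrt 2 := Real.sqrt_pos.mpr (by norm_num)
  have hrpos : 0 < r := lt_of_lt_of_le (mul_pos (by positivity) hd) hcon
  have hr2 : d ^ 2 ≤ 2 * r ^ 2 := by
    have h1 : d / Real.sqrt 2 ≤ r := by
      rw [div_eq_mul_inv, mul_comm, ← div_eq_inv_mul]
      calc d / Real.sqrt 2 = 1 / Real.sqrt 2 * d := by ring
        _ ≤ r := hcon
    have h2 : (d / Real.sqrt 2) ^ 2 = d ^ 2 / 2 := by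
      rw [div_pow, Real.sq_sqrt (by norm_num : (0:ℝ) ≤ 2)]
    have h0 : 0 ≤ d / Real.sqrt 2 := by positivity
    have h3 : (d / Real.sqrt 2) ^ 2 ≤ r ^ 2 := pow_le_pow_left₀ h0 h1 2
    linarith
  -- covering
  obtain ⟨T, hTK, hTfin, hTcov⟩ := hc.finite_cover_balls (show (0:ℝ) < d/4 by linarith)
  set k := hTfin.toFinset.card + 1 with hk_def
  set ε := min r (3 * d ^ 2 / (16 * r * 4 ^ (k + 1))) with hε_def
  have hεpos : 0 < ε := lt_min hrpos (div_pos (by nlinarith [hd])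
    (mul_pos (by linarith : (0:ℝ) < 16 * r) (by positivity)))
  have hεr : ε ≤ r := min_le_left _ _
  set S := {x ∈ K | r - ε ≤ ‖x - c‖} with hS_def
  have hSK : S ⊆ K := fun x hx => hx.1
  have hSne : S.Nonempty := by
    obtain ⟨x, hx, _, he⟩ := hatt c
    exact ⟨x, hx, by rw [← he]; linarith⟩
  have hmem : c ∈ closure (convexHull ℝ S) := by
    by_contra hnot
    obtain ⟨φ, u, hu1, hu2⟩ := geometric_hahn_banach_closed_point
      ((convex_convexHull ℝ S).closure) isClosed_closure hnot
    set v := (InnerProductSpace.toDual ℝ H).symm φ with hv_def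
    have hφ : ∀ z : H, φ z = ⟪v, z⟫ := by
      intro z
      rw [hv_def]
      exact (InnerProductSpace.toDual_symm_apply).symm
    set tt := φ c - u with htt_def
    have httpos : 0 < tt := by rw [htt_def]; linarith
    have hvne : v ≠ 0 := by
      intro h
      obtain ⟨x, hxS⟩ := hSne
      have h1 : φ x < u := hu1 x (subset_closure (subset_convexHull ℝ S hxS))
      have h2 : φ x = 0 := by rw [hφ, h, inner_zero_left]
      have h3 : φ c = 0 := by rw [hφ, h, inner_zero_left]
      rw [h2] at h1; rw [h3] at hu2; linarith
    have hvpos : 0 < ‖v‖ := norm_pos_iff.mpr hvne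
    set s₀ := min (tt / ‖v‖ ^ 2) (ε / (2 * ‖v‖)) with hs₀_def
    have hs₀pos : 0 < s₀ := lt_min (div_pos httpos (pow_pos hvpos 2))
      (div_pos hεpos (by linarith))
    set c' := c - s₀ • v with hc'_def
    have hbound : ∀ x ∈ K, ‖x - c'‖ < r := by
      intro x hx
      have hxc' : x - c' = (x - c) + s₀ • v := by rw [hc'_def]; abel
      by_cases hxS : r - ε ≤ ‖x - c‖
      · have hxS' : x ∈ S := ⟨hx, hxS⟩
        have hsep : ⟪v, x - c⟫ ≤ -tt := by
          have h1 : φ x < u := hu1 x (subset_closure (subset_convexHull ℝ S hxS'))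
          have h2 : ⟪v, x - c⟫ = φ x - φ c := by rw [inner_sub_right, hφ, hφ]
          rw [h2, htt_def]; linarith
        have hxc : ‖x - c‖ ≤ r := hRle c x hx
        have hexp : ‖x - c'‖ ^ 2 = ‖x - c‖ ^ 2 + 2 * (s₀ * ⟪v, x - c⟫) + s₀ ^ 2 * ‖v‖ ^ 2 := by
          rw [hxc', norm_add_sq_real, real_inner_smul_right, norm_smul, Real.norm_eq_abs,
            mul_pow, sq_abs, real_inner_comm]
        have h1 : s₀ ≤ tt / ‖v‖ ^ 2 := min_le_left _ _
        have h2 : s₀ * ‖v‖ ^ 2 ≤ tt := by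
          rw [← le_div_iff₀ (pow_pos hvpos 2)]; exact h1
        have hsq : ‖x - c'‖ ^ 2 < r ^ 2 := by
          have h3 : s₀ * ⟪v, x - c⟫ ≤ s₀ * (-tt) :=
            mul_le_mul_of_nonneg_left hsep (le_of_lt hs₀pos)
          have h4 : s₀ ^ 2 * ‖v‖ ^ 2 ≤ s₀ * tt := by
            have h5 := mul_le_mul_of_nonneg_left h2 (le_of_lt hs₀pos)
            calc s₀ ^ 2 * ‖v‖ ^ 2 = s₀ * (s₀ * ‖v‖ ^ 2) := by ring
              _ ≤ s₀ * tt := h5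
          have hxc2 : ‖x - c‖ ^ 2 ≤ r ^ 2 := pow_le_pow_left₀ (norm_nonneg _) hxc 2
          have h6 : 0 < s₀ * tt := mul_pos hs₀pos httpos
          rw [hexp]
          linarith
        exact lt_of_pow_lt_pow_left₀ 2 (le_of_lt hrpos) hsq
      · push_neg at hxS
        have h1 : ‖x - c'‖ ≤ ‖x - c‖ + s₀ * ‖v‖ := by
          rw [hxc']
          calc ‖(x - c) + s₀ • v‖ ≤ ‖x - c‖ + ‖s₀ • v‖ := norm_add_le _ _
            _ = ‖x - c‖ + s₀ * ‖v‖ := by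
                rw [norm_smul, Real.norm_eq_abs, abs_of_pos hs₀pos]
        have h2 : s₀ * ‖v‖ ≤ ε / 2 := by
          have h3 : s₀ ≤ ε / (2 * ‖v‖) := min_le_right _ _
          calc s₀ * ‖v‖ ≤ ε / (2 * ‖v‖) * ‖v‖ := mul_le_mul_of_nonneg_right h3 (le_of_lt hvpos)
            _ = ε / 2 := by field_simp
        linarith
    obtain ⟨x, hxK, _, he⟩ := hatt c'
    have : R c' < r := by rw [he]; exact hbound x hxK
    have := hglob c'
    linarith
  obtain ⟨p, hpS, hpc⟩ := Metric.mem_closure_iff.mp hmem ε hεpos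
  rw [convexHull_eq] at hpS
  obtain ⟨ι, t, w, z, hw0, hw1, hzS, hcm⟩ := hpS
  have hmc : p = ∑ i ∈ t, w i • z i := by
    rw [← hcm, Finset.centerMass_eq_of_sum_1 _ _ hw1]
  have hid := sum_identity t w (fun i => z i - c) hw1
  have hsum_u : ∑ i ∈ t, w i • (z i - c) = p - c := by
    rw [hmc]
    rw [Finset.sum_congr rfl (fun i (_ : i ∈ t) => smul_sub (w i) (z i) c),
      Finset.sum_sub_distrib, ← Finset.sum_smul, hw1, one_smul]
  have hpcn : ‖p - c‖ < ε := by
    rw [Metric.mem_closure_iff] at hmem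
    rw [dist_eq_norm, norm_sub_rev] at hpc
    exact hpc
  have hlow : 2 * (r - ε) ^ 2 - 2 * ε ^ 2 ≤ ∑ i ∈ t, ∑ j ∈ t, w i * w j * ‖(z i - c) - (z j - c)‖ ^ 2 := by
    rw [hid, hsum_u]
    have h1 : (r - ε) ^ 2 ≤ ∑ i ∈ t, w i * ‖z i - c‖ ^ 2 := by
      calc (r - ε) ^ 2 = ∑ i ∈ t, w i * (r - ε) ^ 2 := by
            rw [← Finset.sum_mul, hw1, one_mul]
        _ ≤ ∑ i ∈ t, w i * ‖z i - c‖ ^ 2 := by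
            refine Finset.sum_le_sum fun i hi => mul_le_mul_of_nonneg_left ?_ (hw0 i hi)
            have hzi := (hzS i hi).2
            have : 0 ≤ r - ε := by linarith
            nlinarith
    have h2 : ‖p - c‖ ^ 2 ≤ ε ^ 2 := by nlinarith [norm_nonneg (p - c)]
    linarith
  set β := ∑ i ∈ t, ∑ j ∈ t, if ‖z i - z j‖ ≤ d / 2 then w i * w j else 0 with hβ_def
  have hdK : ∀ x ∈ K, ∀ y ∈ K, ‖x - y‖ ≤ d := by
    intro x hx y hy
    rw [← dist_eq_norm]
    calc dist x y ≤ Metric.diam K := Metric.dist_le_diam_of_mem hKb hx hy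
      _ = d := hdiamK
  have hup : ∑ i ∈ t, ∑ j ∈ t, w i * w j * ‖(z i - c) - (z j - c)‖ ^ 2
      ≤ d ^ 2 - 3 / 4 * d ^ 2 * β := by
    have hterm : ∀ i ∈ t, ∀ j ∈ t, w i * w j * ‖(z i - c) - (z j - c)‖ ^ 2
        ≤ w i * w j * d ^ 2 - (if ‖z i - z j‖ ≤ d / 2 then w i * w j else 0) * (3 / 4 * d ^ 2) := by
      intro i hi j hj
      have hzz : (z i - c) - (z j - c) = z i - z j := by abel
      rw [hzz]
      have hwn : 0 ≤ w i * w j := mul_nonneg (hw0 i hi) (hw0 j hj)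
      have hzd : ‖z i - z j‖ ≤ d := hdK _ (hSK (hzS i hi)) _ (hSK (hzS j hj))
      split_ifs with hb
      · have h1 : ‖z i - z j‖ ^ 2 ≤ d ^ 2 / 4 := by nlinarith [norm_nonneg (z i - z j), hd]
        nlinarith
      · have h1 : ‖z i - z j‖ ^ 2 ≤ d ^ 2 := by nlinarith [norm_nonneg (z i - z j)]
        nlinarith
    calc ∑ i ∈ t, ∑ j ∈ t, w i * w j * ‖(z i - c) - (z j - c)‖ ^ 2
        ≤ ∑ i ∈ t, ∑ j ∈ t, (w i * w j * d ^ 2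
            - (if ‖z i - z j‖ ≤ d / 2 then w i * w j else 0) * (3 / 4 * d ^ 2)) :=
          Finset.sum_le_sum fun i hi => Finset.sum_le_sum fun j hj => hterm i hi j hj
      _ = d ^ 2 - 3 / 4 * d ^ 2 * β := by
          have e1 : ∀ i ∈ t, ∑ j ∈ t, (w i * w j * d ^ 2
              - (if ‖z i - z j‖ ≤ d / 2 then w i * w j else 0) * (3 / 4 * d ^ 2))
              = (∑ j ∈ t, w i * w j) * d ^ 2
                - (∑ j ∈ t, if ‖z i - z j‖ ≤ d / 2 then w i * w j else 0) * (3 / 4 * d ^ 2) := by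
            intro i _
            rw [Finset.sum_sub_distrib, Finset.sum_mul, Finset.sum_mul]
          rw [Finset.sum_congr rfl e1, Finset.sum_sub_distrib, ← Finset.sum_mul, ← Finset.sum_mul]
          have hww : (∑ i ∈ t, ∑ j ∈ t, w i * w j) = 1 := by
            rw [← Finset.sum_mul_sum, hw1, one_mul]
          rw [hww, ← hβ_def]
          ring
  have hβnn : 0 ≤ β := by
    rw [hβ_def]
    refine Finset.sum_nonneg fun i hi => Finset.sum_nonneg fun j hj => ?_
    split_ifs
    · exact mul_nonneg (hw0 i hi) (hw0 j hj)
    · exact le_rfl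
  have hβle : β ≤ (∑ i ∈ t, w i) ^ 2 / 4 ^ (k + 1) := by
    rw [hw1, one_pow]
    have h4 : (0:ℝ) < 4 ^ (k + 1) := by positivity
    have h3 : 3 / 4 * d ^ 2 * β ≤ 4 * r * ε := by nlinarith [hlow, hup, hr2]
    have hεle : ε ≤ 3 * d ^ 2 / (16 * r * 4 ^ (k + 1)) := min_le_right _ _
    rw [le_div_iff₀ (by positivity)] at hεle
    rw [le_div_iff₀ h4]
    nlinarith [mul_le_mul_of_nonneg_right h3 (le_of_lt h4), hεle, mul_pos hd hd, hrpos, hεpos, h4]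
  obtain ⟨f, hft, hfgood⟩ := comb_aux (fun i j => ‖z i - z j‖ ≤ d / 2)
    (fun i j h => by
      show ‖z j - z i‖ ≤ d / 2
      rw [norm_sub_rev]
      exact h)
    (fun i => by show ‖z i - z i‖ ≤ d / 2; simp only [sub_self, norm_zero]; linarith)
    k t w hw0 (by rw [hw1]; norm_num) hβle
  have hxK : ∀ a : Fin k, z (f a) ∈ K := fun a => hSK (hzS _ (hft a))
  have hcent : ∀ a : Fin k, ∃ yc ∈ hTfin.toFinset, z (f a) ∈ Metric.ball yc (d / 4) := by
    intro a
    have := hTcov (hxK a)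
    simp only [Set.mem_iUnion] at this
    obtain ⟨yc, hyc, h⟩ := this
    exact ⟨yc, hTfin.mem_toFinset.mpr hyc, h⟩
  choose g hg1 hg2 using hcent
  obtain ⟨a, -, b, -, hab, hgab⟩ := Finset.exists_ne_map_eq_of_card_lt_of_maps_to
    (show hTfin.toFinset.card < (Finset.univ : Finset (Fin k)).card by
      simp [hk_def]) (fun a _ => hg1 a)
  have hd2 : dist (z (f a)) (z (f b)) < d / 2 := by
    have h1 : dist (z (f a)) (g a) < d / 4 := Metric.mem_ball.mp (hg2 a)
    have h2 : dist (z (f b)) (g b) < d / 4 := Metric.mem_ball.mp (hg2 b)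
    rw [← hgab] at h2
    calc dist (z (f a)) (z (f b)) ≤ dist (z (f a)) (g a) + dist (g a) (z (f b)) :=
          dist_triangle _ _ _
      _ < d / 4 + d / 4 := by rw [dist_comm (g a)]; linarith
      _ = d / 2 := by ring
  exact hfgood a b hab (by
    show ‖z (f a) - z (f b)‖ ≤ d / 2
    rw [← dist_eq_norm]
    linarith)
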